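/- Let 𝒰 be a bounded, norm-closed multiplicative semigroup of invertible complex k×k matrices in which the only idempotent is the identity matrix. Then 𝒰 is a group. -/
import Mathlib


open Matrix

/-- The operator norm of a complex matrix acting on `ℂ^k` with the standard
inner product. -/
noncomputable def opNorm {k : ℕ} (T : Matrix (Fin k) (Fin k) ℂ) : ℝ :=
  ‖Matrix.toEuclideanCLM (𝕜 := ℂ) T‖

/-- `Matrix.toEuclideanCLM` as a linear equivalence. -/
noncomputable def matCLM (k : ℕ) :
    Matrix (Fin k) (Fin k) ℂ ≃ₗ[ℂ] (EuclideanSpace ℂ (Fin k) →L[ℂ] EuclideanSpace ℂ (Fin k)) where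
  toFun := Matrix.toEuclideanCLM (𝕜 := ℂ)
  invFun := (Matrix.toEuclideanCLM (𝕜 := ℂ)).symm
  map_add' := map_add _
  map_smul' := map_smul _
  left_inv := fun A => (Matrix.toEuclideanCLM (𝕜 := ℂ)).symm_apply_apply A
  right_inv := fun T => (Matrix.toEuclideanCLM (𝕜 := ℂ)).apply_symm_apply T

/-- `Matrix.toEuclideanCLM` as a homeomorphism. -/
noncomputable def matHomeo (k : ℕ) :
    Matrix (Fin k) (Fin k) ℂ ≃ₜ (EuclideanSpace ℂ (Fin k) →L[ℂ] EuclideanSpace ℂ (Fin k)) :=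
  (matCLM k).toContinuousLinearEquiv.toHomeomorph

set_option synthInstance.maxHeartbeats 1000000 in
set_option maxHeartbeats 1000000 in
/-- A bounded, norm-closed, nonempty semigroup of invertible matrices whose only
idempotent is the identity is a group: it contains the identity and the inverse
of each of its elements. -/
theorem stmt12 {k : ℕ} (𝒰 : Set (Matrix (Fin k) (Fin k) ℂ))
    (hne : 𝒰.Nonempty)
    (hmul : ∀ A ∈ 𝒰, ∀ B ∈ 𝒰, A * B ∈ 𝒰)
    (hclosed : IsClosed 𝒰)
    (hbdd : ∃ C : ℝ, ∀ U ∈ 𝒰, opNorm U ≤ C)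
    (hinv : ∀ U ∈ 𝒰, IsUnit U)
    (hidem : ∀ P ∈ 𝒰, P * P = P → P = 1) :
    (1 : Matrix (Fin k) (Fin k) ℂ) ∈ 𝒰 ∧
      ∀ U ∈ 𝒰, ∃ V ∈ 𝒰, U * V = 1 ∧ V * U = 1 := by
  classical
  obtain ⟨C, hC⟩ := hbdd
  haveI : FirstCountableTopology (Matrix (Fin k) (Fin k) ℂ) :=
    inferInstanceAs (FirstCountableTopology (Fin k → Fin k → ℂ))
  -- 𝒰 is compact: its image under `matHomeo` is closed and bounded in a proper space
  have himg : IsCompact ((matHomeo k) '' 𝒰) := by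
    apply Metric.isCompact_of_isClosed_isBounded
    · exact (matHomeo k).isClosedMap _ hclosed
    · rw [Metric.isBounded_iff_subset_closedBall 0]
      refine ⟨C, ?_⟩
      rintro x ⟨A, hA, rfl⟩
      have hAe : (matHomeo k) A = Matrix.toEuclideanCLM (𝕜 := ℂ) A := rfl
      rw [mem_closedBall_zero_iff, hAe]
      exact hC A hA
  have hcomp : IsCompact 𝒰 := (matHomeo k).isCompact_image.mp himg
  -- key step: for every U ∈ 𝒰 we have 1 ∈ 𝒰 and a right inverse of U in 𝒰
  have key : ∀ U ∈ 𝒰, (1 : Matrix (Fin k) (Fin k) ℂ) ∈ 𝒰 ∧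
      ∃ V ∈ 𝒰, U * V = 1 := by
    intro U hU
    -- powers of U lie in 𝒰
    have hpow : ∀ n : ℕ, U ^ (n + 1) ∈ 𝒰 := by
      intro n
      induction n with
      | zero => simpa using hU
      | succ m ih => rw [pow_succ]; exact hmul _ ih _ hU
    set P : Set (Matrix (Fin k) (Fin k) ℂ) := {A | ∃ n : ℕ, A = U ^ (n + 1)} with hP
    have hPU : P ⊆ 𝒰 := by rintro A ⟨n, rfl⟩; exact hpow n
    have hPmul : ∀ x ∈ P, ∀ y ∈ P, x * y ∈ P := by
      rintro x ⟨m, rfl⟩ y ⟨n, rfl⟩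
      exact ⟨m + n + 1, by rw [← pow_add]; ring_nf⟩
    set S := closure P with hS
    have hSU : S ⊆ 𝒰 := closure_minimal hPU hclosed
    have hScomp : IsCompact S := hcomp.of_isClosed_subset isClosed_closure hSU
    have hSne : S.Nonempty := ⟨U, subset_closure ⟨0, by simp⟩⟩
    have hSmul : ∀ x ∈ S, ∀ y ∈ S, x * y ∈ S := fun x hx y hy =>
      map_mem_closure₂ continuous_mul hx hy hPmul
    -- the compact semigroup S contains an idempotent, which must be 1
    obtain ⟨m, hmS, hmm⟩ :=
      exists_idempotent_in_compact_subsemigroup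
        (fun r => continuous_mul_right r) S hSne hScomp hSmul
    have hm1 : m = 1 := hidem m (hSU hmS) hmm
    have h1S : (1 : Matrix (Fin k) (Fin k) ℂ) ∈ S := hm1 ▸ hmS
    refine ⟨hSU h1S, ?_⟩
    -- 1 is a limit of powers of U
    obtain ⟨f, hfP, hf1⟩ := mem_closure_iff_seq_limit.mp h1S
    choose n hn using hfP
    -- the squared sequence also tends to 1
    have hsq : Filter.Tendsto (fun j => U ^ (2 * n j + 2)) Filter.atTop (nhds 1) := by
      have h2 : Filter.Tendsto (fun j => f j * f j) Filter.atTop (nhds (1 * 1)) :=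
        hf1.mul hf1
      simp only [one_mul] at h2
      convert h2 using 2 with j
      rw [hn j, ← pow_add]; ring_nf
    -- extract a convergent subsequence of U ^ (2 * n j + 1)
    have hw : ∀ j, U ^ (2 * n j + 1) ∈ 𝒰 := fun j => hpow _
    obtain ⟨V, hV𝒰, φ, hφ, hVlim⟩ := hcomp.tendsto_subseq hw
    refine ⟨V, hV𝒰, ?_⟩
    have h1 : Filter.Tendsto (fun i => U * U ^ (2 * n (φ i) + 1)) Filter.atTop (nhds (U * V)) :=
      tendsto_const_nhds.mul hVlim
    have h2 : Filter.Tendsto (fun i => U * U ^ (2 * n (φ i) + 1)) Filter.atTop (nhds 1) := by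
      have h3 := hsq.comp hφ.tendsto_atTop
      convert h3 using 2 with i
      simp only [Function.comp_apply]
      rw [← pow_succ']
    exact tendsto_nhds_unique h1 h2
  obtain ⟨U, hU⟩ := hne
  refine ⟨(key U hU).1, fun W hW => ?_⟩
  obtain ⟨-, V, hV, hWV⟩ := key W hW
  exact ⟨V, hV, hWV, mul_eq_one_comm.mp hWV⟩
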